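/- Let a be a semi-integer (2a ∈ ℤ, a ≠ 0) and let x be an (n−2)-dimensional central configuration for the potential U_a with positive masses m_1, …, m_n and multiplier λ, normalized so that λ/M = 1 (i.e. r_0 = 1). Then there exist complex numbers z_1, …, z_n and Δ_0, which are either all real or all purely imaginary, with at least two of the z_i nonzero, such that: (i) r_{ij}^{2a} − 1 − z_i z_j = 0 for all 1 ≤ i < j ≤ n; (ii) det A(x) = 0; (iii) ∑_{j=1}^n m_j z_j = 0 and Δ_0 + ∑_{j=1}^n m_j z_j r_{jl}² = 0 for every l = 1, …, n (with r_{ll} = 0). Moreover, the tuple (z_1, …, z_n, Δ_0) is unique up to replacing it by (−z_1, …, −z_n, −Δ_0). -/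

import Mathlib

/-- The dimension of a configuration: the dimension of the smallest affine
subspace containing the points. -/
noncomputable def confDim {d n : ℕ} (x : Fin n → EuclideanSpace ℝ (Fin d)) : ℕ :=
  Module.finrank ℝ (affineSpan ℝ (Set.range x)).direction

/-- `x` is a central configuration for the potential `U_a` (with `c2 = 2a ∈ ℤ`),
masses `m`, and multiplier `lam`. -/
def IsCentralConfig {d n : ℕ} (c2 : ℤ) (m : Fin n → ℝ) (lam : ℝ)
    (x : Fin n → EuclideanSpace ℝ (Fin d)) : Prop :=
  ∀ j : Fin n,
    (∑ i ∈ Finset.univ \ {j}, (m i * dist (x i) (x j) ^ c2) • (x i - x j))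
      + lam • (x j - (∑ i, m i)⁻¹ • ∑ i, m i • x i) = 0

/-- The Cayley–Menger matrix of a configuration. -/
noncomputable def cayleyMenger {n d : ℕ} (x : Fin n → EuclideanSpace ℝ (Fin d)) :
    Matrix (Fin (n + 1)) (Fin (n + 1)) ℝ :=
  Matrix.of fun i j =>
    Fin.cases (Fin.cases 0 (fun _ => 1) j)
      (fun i' => Fin.cases 1 (fun j' => dist (x i') (x j') ^ 2) j) i


open Finset

noncomputable def Tmap {n d : ℕ} (x : Fin n → EuclideanSpace ℝ (Fin d)) :
    (Fin n → ℝ) →ₗ[ℝ] ℝ × EuclideanSpace ℝ (Fin d) where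
  toFun c := (∑ i, c i, ∑ i, c i • x i)
  map_add' a b := by
    simp [add_smul, Finset.sum_add_distrib, Prod.ext_iff]
  map_smul' r a := by
    simp [Finset.smul_sum, smul_smul, Prod.ext_iff, Finset.mul_sum]

lemma aux_kernel {n : ℕ} (hn : 3 ≤ n) (x : Fin n → EuclideanSpace ℝ (Fin (n-2)))
    (hdim : Module.finrank ℝ (affineSpan ℝ (Set.range x)).direction = n - 2) :
    ∃ Δ : Fin n → ℝ, Δ ≠ 0 ∧ ∑ i, Δ i = 0 ∧ ∑ i, Δ i • x i = 0 ∧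
      ∀ c : Fin n → ℝ, (∑ i, c i = 0) → (∑ i, c i • x i = 0) → ∃ t : ℝ, c = t • Δ := by
  classical
  have i0 : Fin n := ⟨0, by omega⟩
  set T := Tmap x with hT
  have hTapp : ∀ c, T c = (∑ i, c i, ∑ i, c i • x i) := fun c => rfl
  -- u i ∈ range T
  have hu : ∀ i, ((1 : ℝ), x i) ∈ LinearMap.range T := by
    intro i
    refine ⟨Pi.single i 1, ?_⟩
    rw [hTapp]
    simp [Pi.single_apply, Finset.sum_ite_eq', ite_smul]
  -- W' := map inr vectorSpan ≤ range T
  set W : Submodule  ℝ (EuclideanSpace ℝ (Fin (n-2))) := (affineSpan ℝ (Set.range x)).direction with hW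
  have hWvs : W = vectorSpan ℝ (Set.range x) := direction_affineSpan ℝ _
  set inr := LinearMap.inr ℝ  ℝ (EuclideanSpace ℝ (Fin (n-2))) with hinr
  set W' : Submodule ℝ (ℝ × (EuclideanSpace ℝ (Fin (n-2)))) := W.map inr with hW'
  have hW'le : W' ≤ LinearMap.range T := by
    rw [hW', hWvs, vectorSpan_def, Submodule.map_span, Submodule.span_le]
    rintro v ⟨w, hw, rfl⟩
    rw [Set.mem_vsub] at hw
    obtain ⟨a, ha, b, hb, rfl⟩ := hw
    obtain ⟨i, rfl⟩ := ha
    obtain ⟨j, rfl⟩ := hb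
    have : inr (x i -ᵥ x j) = ((1:ℝ), x i) - ((1:ℝ), x j) := by
      simp [hinr, Prod.ext_iff]
    rw [this]
    exact sub_mem (hu i) (hu j)
  have hW'rank : Module.finrank ℝ W' = n - 2 := by
    rw [hW']
    rw [← LinearEquiv.finrank_eq (Submodule.equivMapOfInjective inr LinearMap.inr_injective W)]
    exact hdim
  have hu0W' : ((1:ℝ), x i0) ∉ W' := by
    rintro ⟨w, _, hw⟩
    have := congrArg Prod.fst hw
    simp [hinr] at this
  -- finrank range T ≥ n - 1
  have hrange : n - 1 ≤ Module.finrank ℝ (LinearMap.range T) := by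
    have hlt : W' < W' ⊔ Submodule.span ℝ {((1:ℝ), x i0)} := by
      refine lt_of_le_of_ne le_sup_left fun h => hu0W' ?_
      rw [h]
      exact Submodule.mem_sup_right (Submodule.mem_span_singleton_self _)
    have h1 : Module.finrank ℝ W' < Module.finrank ℝ (W' ⊔ Submodule.span ℝ {((1:ℝ), x i0)} : Submodule ℝ (ℝ × (EuclideanSpace ℝ (Fin (n-2))))) :=
      Submodule.finrank_lt_finrank_of_lt hlt
    have h2 : (W' ⊔ Submodule.span ℝ {((1:ℝ), x i0)} : Submodule ℝ (ℝ × (EuclideanSpace ℝ (Fin (n-2))))) ≤ LinearMap.range T := by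
      refine sup_le hW'le ?_
      rw [Submodule.span_le, Set.singleton_subset_iff]
      exact hu i0
    have h3 := Submodule.finrank_mono h2
    omega
  -- rank-nullity
  have hrn := LinearMap.finrank_range_add_finrank_ker T
  have hdom : Module.finrank ℝ (Fin n → ℝ) = n := by simp
  have hcod : Module.finrank ℝ (ℝ × (EuclideanSpace ℝ (Fin (n-2)))) = n - 1 := by
    simp
    omega
  have hrle : Module.finrank ℝ (LinearMap.range T) ≤ n - 1 := by
    rw [← hcod]; exact Submodule.finrank_le _
  have hker1 : Module.finrank ℝ (LinearMap.ker T) = 1 := by omega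
  obtain ⟨⟨Δ, hΔmem⟩, hΔne, hΔall⟩ := (finrank_eq_one_iff' ).mp hker1
  have hΔmem' := hΔmem
  rw [LinearMap.mem_ker, hTapp, Prod.mk_eq_zero] at hΔmem'
  refine ⟨Δ, ?_, hΔmem'.1, hΔmem'.2, ?_⟩
  · intro h; exact hΔne (by simp [h])
  · intro c hc1 hc2
    have hcmem : c ∈ LinearMap.ker T := by
      rw [LinearMap.mem_ker, hTapp, Prod.mk_eq_zero]; exact ⟨hc1, hc2⟩
    obtain ⟨t, ht⟩ := hΔall ⟨c, hcmem⟩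
    exact ⟨t, by simpa [Subtype.ext_iff] using ht.symm⟩

lemma aux_sum {n d : ℕ} (x : Fin n → EuclideanSpace ℝ (Fin d)) (Δ : Fin n → ℝ)
    (h1 : ∑ i, Δ i = 0) (h2 : ∑ i, Δ i • x i = 0) (l : Fin n) :
    ∑ j, Δ j * dist (x j) (x l) ^ 2 = ∑ j, Δ j * ‖x j‖ ^ 2 := by
  have hd : ∀ j, dist (x j) (x l) ^ 2
      = ‖x j‖^2 - 2 * (inner ℝ (x j) (x l) : ℝ) + ‖x l‖^2 := fun j => by
    rw [dist_eq_norm]; exact norm_sub_sq_real _ _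
  calc ∑ j, Δ j * dist (x j) (x l)^2
      = ∑ j, (Δ j * ‖x j‖^2 - 2 * (inner ℝ (Δ j • x j) (x l) : ℝ) + Δ j * ‖x l‖^2) := by
        refine Finset.sum_congr rfl fun j _ => ?_
        rw [hd j, real_inner_smul_left]; ring
    _ = ∑ j, Δ j * ‖x j‖^2 := by
        rw [Finset.sum_add_distrib, Finset.sum_sub_distrib, ← Finset.sum_mul, h1,
          ← Finset.mul_sum, ← sum_inner, h2]
        simp

lemma aux_nodeg {n d : ℕ} (x : Fin n → EuclideanSpace ℝ (Fin d)) (Δ : Fin n → ℝ)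
    (h1 : ∑ i, Δ i = 0) (h2 : ∑ i, Δ i • x i = 0)
    (hdist : ∀ i j, i ≠ j → dist (x i) (x j) = 1) : Δ = 0 := by
  classical
  have key : ∑ i, Δ i * (∑ j, Δ j * dist (x j) (x i) ^ 2) = 0 := by
    have : ∀ i : Fin n, (∑ j, Δ j * dist (x j) (x i) ^ 2) = ∑ j, Δ j * ‖x j‖^2 :=
      fun i => aux_sum x Δ h1 h2 i
    simp only [this, ← Finset.sum_mul, h1, zero_mul]
  have key2 : ∀ i : Fin n, (∑ j, Δ j * dist (x j) (x i) ^ 2) = - Δ i := by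
    intro i
    have : ∀ j : Fin n, Δ j * dist (x j) (x i) ^ 2 = Δ j - (if j = i then Δ j else 0) := by
      intro j
      by_cases h : j = i
      · simp [h]
      · rw [hdist j i h]; simp [h]
    rw [Finset.sum_congr rfl fun j _ => this j, Finset.sum_sub_distrib, h1,
      Finset.sum_ite_eq' Finset.univ i Δ]
    simp
  rw [Finset.sum_congr rfl fun i _ => by rw [key2 i]] at key
  have : ∑ i, Δ i ^ 2 = 0 := by
    rw [← neg_eq_zero, ← key]
    rw [← Finset.sum_neg_distrib]
    exact Finset.sum_congr rfl fun i _ => by ring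
  have := fun i (hi : i ∈ Finset.univ) => (Finset.sum_eq_zero_iff_of_nonneg
    (fun i _ => sq_nonneg (Δ i))).mp this i hi
  funext i
  have h := this i (Finset.mem_univ i)
  exact pow_eq_zero_iff (by norm_num) |>.mp h

lemma aux_uniq {n : ℕ} (m : Fin n → ℝ) (hm : ∀ i, 0 < m i) (z z' : Fin n → ℂ)
    (hprod : ∀ i j, i ≠ j → z' i * z' j = z i * z j)
    (a b : Fin n) (hab : a ≠ b) (ha : z a ≠ 0) (hb : z b ≠ 0)
    (hz : ∑ j, (m j : ℂ) * z j = 0) (hz' : ∑ j, (m j : ℂ) * z' j = 0) :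
    z' = z ∨ z' = -z := by
  classical
  -- nonzero indices of z are nonzero for z'
  have hpick : ∀ j : Fin n, ∃ k, k ≠ j ∧ z k ≠ 0 := by
    intro j
    by_cases h : j = a
    · exact ⟨b, by rw [h]; exact Ne.symm hab, hb⟩
    · exact ⟨a, fun h' => h h'.symm, ha⟩
  have hne : ∀ j, z j ≠ 0 → z' j ≠ 0 := by
    intro j hj
    obtain ⟨k, hkj, hk⟩ := hpick j
    have := hprod j k (Ne.symm hkj)
    intro h0
    rw [h0, zero_mul] at this
    exact mul_ne_zero hj hk this.symm
  have hzero : ∀ j, z j = 0 → z' j = 0 := by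
    intro j hj
    obtain ⟨k, hkj, hk⟩ := hpick j
    have := hprod j k (Ne.symm hkj)
    rw [hj, zero_mul] at this
    exact (mul_eq_zero.mp this).resolve_right (hne k hk)
  -- key: (z' a)^2 = (z a)^2
  have hsq : z' a * z' a = z a * z a := by
    by_cases hex : ∃ k, k ≠ a ∧ k ≠ b ∧ z k ≠ 0
    · obtain ⟨k, hka, hkb, hk⟩ := hex
      have h1 := hprod a b hab
      have h2 := hprod a k (Ne.symm hka)
      have h3 := hprod b k (Ne.symm hkb)
      have hbk : z' b * z' k ≠ 0 := by rw [h3]; exact mul_ne_zero hb hk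
      have : (z' a * z' a) * (z' b * z' k) = (z a * z a) * (z' b * z' k) := by
        calc (z' a * z' a) * (z' b * z' k) = (z' a * z' b) * (z' a * z' k) := by ring
          _ = (z a * z b) * (z a * z k) := by rw [h1, h2]
          _ = (z a * z a) * (z b * z k) := by ring
          _ = (z a * z a) * (z' b * z' k) := by rw [h3]
      exact mul_right_cancel₀ hbk this
    · push_neg at hex
      -- only a and b nonzero
      have hzs : ∀ j, j ≠ a → j ≠ b → z j = 0 := fun j hja hjb => hex j hja hjb
      have hsum : ∀ w : Fin n → ℂ, (∀ j, z j = 0 → w j = 0) →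
          (∑ j, (m j : ℂ) * w j) = (m a : ℂ) * w a + (m b : ℂ) * w b := by
        intro w hw
        rw [← Finset.sum_subset (Finset.subset_univ {a, b})]
        · rw [Finset.sum_pair hab]
        · intro j _ hj
          simp only [Finset.mem_insert, Finset.mem_singleton, not_or] at hj
          rw [hw j (hzs j hj.1 hj.2), mul_zero]
      have e1 : (m a : ℂ) * z a + (m b : ℂ) * z b = 0 := by rw [← hsum z fun j h => h]; exact hz
      have e2 : (m a : ℂ) * z' a + (m b : ℂ) * z' b = 0 := by rw [← hsum z' hzero]; exact hz'
      have hmb : (m b : ℂ) ≠ 0 := by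
        simp only [ne_eq, Complex.ofReal_eq_zero]; exact (hm b).ne'
      have hzb : z b = -((m a : ℂ) / m b) * z a := by field_simp; linear_combination e1
      have hzb' : z' b = -((m a : ℂ) / m b) * z' a := by field_simp; linear_combination e2
      have h1 := hprod a b hab
      have hma : (m a : ℂ) ≠ 0 := by
        simp only [ne_eq, Complex.ofReal_eq_zero]; exact (hm a).ne'
      rw [hzb, hzb'] at h1
      have h3 : (-((m a : ℂ) / m b)) * (z' a * z' a) = (-((m a : ℂ) / m b)) * (z a * z a) := by
        linear_combination h1
      exact mul_left_cancel₀ (neg_ne_zero.mpr (div_ne_zero hma hmb)) h3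
  -- conclude
  have key : ∀ ε : ℂ, ε * ε = 1 → z' a = ε * z a → z' = fun i => ε * z i := by
    intro ε hε hεa
    funext i
    by_cases hi : z i = 0
    · rw [hzero i hi, hi, mul_zero]
    by_cases hia : i = a
    · rw [hia, hεa]
    have h1 := hprod i a hia
    have hza' : z' a ≠ 0 := hne a ha
    have h2 : z' i * z a = (ε * z i) * z a := by
      linear_combination ε * h1 - ε * z' i * hεa - (z' i * z a) * hε
    exact mul_right_cancel₀ ha h2
  rcases mul_self_eq_mul_self_iff.mp hsq with h | h
  · left
    have := key 1 (by ring) (by rw [one_mul]; exact h)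
    rw [this]; funext i; simp
  · right
    have := key (-1) (by ring) (by rw [h]; ring)
    rw [this]; funext i; simp

lemma aux_cm {n d : ℕ} (x : Fin n → EuclideanSpace ℝ (Fin d)) (Δ : Fin n → ℝ) (hΔ : Δ ≠ 0)
    (h1 : ∑ i, Δ i = 0) (h2 : ∑ i, Δ i • x i = 0) :
    (cayleyMenger x).det = 0 := by
  classical
  rw [← Matrix.exists_mulVec_eq_zero_iff]
  set D : ℝ := ∑ j, Δ j * ‖x j‖ ^ 2 with hD
  refine ⟨Fin.cons (-D) Δ, ?_, ?_⟩
  · obtain ⟨i, hi⟩ := Function.ne_iff.mp hΔ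
    intro h0
    apply hi
    have := congrFun h0 i.succ
    simpa using this
  · funext k
    induction k using Fin.cases with
    | zero =>
      simp only [Matrix.mulVec, dotProduct, Fin.sum_univ_succ, cayleyMenger, Matrix.of_apply,
        Fin.cases_zero, Fin.cases_succ, Fin.cons_zero, Fin.cons_succ, Pi.zero_apply]
      rw [zero_mul, zero_add]
      simpa using h1
    | succ i =>
      simp only [Matrix.mulVec, dotProduct, Fin.sum_univ_succ, cayleyMenger, Matrix.of_apply,
        Fin.cases_zero, Fin.cases_succ, Fin.cons_zero, Fin.cons_succ, Pi.zero_apply]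
      rw [one_mul]
      have : ∑ j, dist (x i) (x j) ^ 2 * Δ j = D := by
        rw [hD, ← aux_sum x Δ h1 h2 i]
        exact Finset.sum_congr rfl fun j _ => by rw [dist_comm, mul_comm]
      rw [this]; ring

/-- Let `a` be a nonzero semi-integer (`c2 = 2a ∈ ℤ \ {0}`) and let `x`
be an `(n−2)`-dimensional central configuration for `U_a` with positive masses,
normalized so that `λ = M` (i.e. `λ/M = 1`). Then there exist complex numbers
`z_1, …, z_n, Δ_0`, all real or all purely imaginary, with at least two `z_i` nonzero,
satisfying (i) `r_{ij}^{2a} − 1 − z_i z_j = 0` for `i < j`; (ii) `det A(x) = 0`;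
(iii) `∑ m_j z_j = 0` and `Δ_0 + ∑_j m_j z_j r_{jl}² = 0` for every `l`. Moreover the
tuple `(z, Δ_0)` is unique up to an overall sign. -/
theorem statement8 {n : ℕ} (hn : 3 ≤ n) (c2 : ℤ) (hc2 : c2 ≠ 0)
    (x : Fin n → EuclideanSpace ℝ (Fin (n - 2))) (hinj : Function.Injective x)
    (m : Fin n → ℝ) (hm : ∀ i, 0 < m i)
    (hcc : IsCentralConfig c2 m (∑ i, m i) x)
    (hdim : confDim x = n - 2) :
    ∃ z : Fin n → ℂ, ∃ Δ0 : ℂ,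
      (((∀ i, (z i).im = 0) ∧ Δ0.im = 0) ∨ ((∀ i, (z i).re = 0) ∧ Δ0.re = 0)) ∧
      (∃ i j : Fin n, i ≠ j ∧ z i ≠ 0 ∧ z j ≠ 0) ∧
      (∀ i j : Fin n, i < j → (dist (x i) (x j) : ℂ) ^ c2 - 1 - z i * z j = 0) ∧
      (cayleyMenger x).det = 0 ∧
      (∑ j, (m j : ℂ) * z j = 0) ∧
      (∀ l : Fin n, Δ0 + ∑ j, (m j : ℂ) * z j * (dist (x j) (x l) : ℂ) ^ 2 = 0) ∧
      (∀ (z' : Fin n → ℂ) (Δ0' : ℂ),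
        (∀ i j : Fin n, i < j → (dist (x i) (x j) : ℂ) ^ c2 - 1 - z' i * z' j = 0) →
        (∑ j, (m j : ℂ) * z' j = 0) →
        (∀ l : Fin n, Δ0' + ∑ j, (m j : ℂ) * z' j * (dist (x j) (x l) : ℂ) ^ 2 = 0) →
        ((z' = z ∧ Δ0' = Δ0) ∨ (z' = -z ∧ Δ0' = -Δ0))) := by
  classical
  obtain ⟨Δ, hΔne, hΔ1, hΔ2, huniq⟩ := aux_kernel hn x (by simpa [confDim] using hdim)
  have hM : (0:ℝ) < ∑ i, m i :=
    Finset.sum_pos (fun i _ => hm i) ⟨⟨0, by omega⟩, Finset.mem_univ _⟩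
  -- reduced central configuration equations
  have hred : ∀ j, ∑ i ∈ Finset.univ \ {j},
      (m i * (dist (x i) (x j) ^ c2 - 1)) • (x i - x j) = 0 := by
    intro j
    have h := hcc j
    have hMx : (∑ i, m i) • (x j - (∑ i, m i)⁻¹ • ∑ i, m i • x i)
        = -∑ i ∈ Finset.univ \ {j}, m i • (x i - x j) := by
      rw [smul_sub, smul_inv_smul₀ hM.ne']
      have e1 : (∑ i, m i) • x j = ∑ i, m i • x j := by rw [Finset.sum_smul]
      have e2 : ∑ i ∈ Finset.univ \ {j}, m i • (x i - x j) = ∑ i, m i • (x i - x j) := by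
        refine Finset.sum_subset (Finset.sdiff_subset) fun i _ hi => ?_
        have : i = j := by
          by_contra hne
          exact hi (Finset.mem_sdiff.mpr ⟨Finset.mem_univ i, by simpa using hne⟩)
        simp [this]
      rw [e1, e2, ← Finset.sum_neg_distrib, ← Finset.sum_sub_distrib]
      refine Finset.sum_congr rfl fun i _ => ?_
      rw [smul_sub]; abel
    rw [hMx] at h
    have h' : ∑ i ∈ Finset.univ \ {j}, ((m i * dist (x i) (x j) ^ c2) • (x i - x j)
        - m i • (x i - x j)) = 0 := by
      rw [Finset.sum_sub_distrib, sub_eq_add_neg]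
      exact h
    rw [← h']
    refine Finset.sum_congr rfl fun i _ => ?_
    rw [mul_sub, mul_one, sub_smul]
  -- the affine-dependence coefficients coming from each equation
  set g : Fin n → Fin n → ℝ := fun j i =>
    if i = j then -∑ k ∈ Finset.univ \ {j}, m k * (dist (x k) (x j) ^ c2 - 1)
    else m i * (dist (x i) (x j) ^ c2 - 1) with hg
  have hg1 : ∀ j, ∑ i, g j i = 0 := by
    intro j
    rw [Finset.sum_eq_sum_sdiff_singleton_add (Finset.mem_univ j)]
    have : ∑ i ∈ Finset.univ \ {j}, g j i
        = ∑ i ∈ Finset.univ \ {j}, m i * (dist (x i) (x j) ^ c2 - 1) := by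
      refine Finset.sum_congr rfl fun i hi => ?_
      rw [Finset.mem_sdiff, Finset.mem_singleton] at hi
      simp [hg, hi.2]
    rw [this]
    simp [hg]
  have hg2 : ∀ j, ∑ i, g j i • x i = 0 := by
    intro j
    rw [Finset.sum_eq_sum_sdiff_singleton_add (Finset.mem_univ j)]
    have e3 : ∑ i ∈ Finset.univ \ {j}, g j i • x i
        = ∑ i ∈ Finset.univ \ {j}, g j i • (x i - x j)
          + (∑ i ∈ Finset.univ \ {j}, g j i) • x j := by
      rw [Finset.sum_smul, ← Finset.sum_add_distrib]
      refine Finset.sum_congr rfl fun i _ => ?_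
      rw [smul_sub]; abel
    have e4 : ∑ i ∈ Finset.univ \ {j}, g j i • (x i - x j) = 0 := by
      rw [← hred j]
      refine Finset.sum_congr rfl fun i hi => ?_
      rw [Finset.mem_sdiff, Finset.mem_singleton] at hi
      simp [hg, hi.2]
    have e5 : ∑ i ∈ Finset.univ \ {j}, g j i
        = - g j j := by
      have : ∑ i ∈ Finset.univ \ {j}, g j i
          = ∑ i ∈ Finset.univ \ {j}, m i * (dist (x i) (x j) ^ c2 - 1) := by
        refine Finset.sum_congr rfl fun i hi => ?_
        rw [Finset.mem_sdiff, Finset.mem_singleton] at hi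
        simp [hg, hi.2]
      rw [this]
      simp [hg]
    rw [e3, e4, e5, zero_add, neg_smul, neg_add_cancel]
  choose t htt using fun j => huniq (g j) (hg1 j) (hg2 j)
  have key : ∀ i j : Fin n, i ≠ j → m i * (dist (x i) (x j) ^ c2 - 1) = t j * Δ i := by
    intro i j hij
    have := congrFun (htt j) i
    rw [hg] at this
    simpa [hij] using this
  have hsym : ∀ i j : Fin n, m j * t j * Δ i = m i * t i * Δ j := by
    intro i j
    by_cases hij : i = j
    · rw [hij]
    · have h1 := key i j hij
      have h2 := key j i (fun h => hij h.symm)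
      rw [dist_comm] at h2
      linear_combination m i * h2 - m j * h1
  obtain ⟨i0, hi0⟩ := Function.ne_iff.mp hΔne
  simp only [Pi.zero_apply] at hi0
  set β : ℝ := m i0 * t i0 / Δ i0 with hβdef
  have hβ : ∀ j, m j * t j = β * Δ j := by
    intro j
    have h := hsym i0 j
    rw [hβdef, div_mul_eq_mul_div, eq_div_iff hi0]
    linear_combination h
  have hkey2 : ∀ i j : Fin n, i ≠ j →
      m i * m j * (dist (x i) (x j) ^ c2 - 1) = β * Δ i * Δ j := by
    intro i j hij
    have h1 := key i j hij
    have h2 := hβ j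
    linear_combination m j * h1 + Δ i * h2
  -- β ≠ 0
  have hβ0 : β ≠ 0 := by
    intro h0
    apply hΔne
    refine aux_nodeg x Δ hΔ1 hΔ2 fun i j hij => ?_
    have hk := hkey2 i j hij
    rw [h0, zero_mul, zero_mul] at hk
    have hmm : m i * m j ≠ 0 := (mul_pos (hm i) (hm j)).ne'
    have hpow : dist (x i) (x j) ^ c2 = 1 := by
      rcases mul_eq_zero.mp hk with h | h
      · exact absurd h hmm
      · linarith [h]
    have hdp : (0:ℝ) < dist (x i) (x j) := dist_pos.mpr fun h => hij (hinj h)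
    have hlog : (c2:ℝ) * Real.log (dist (x i) (x j)) = 0 := by
      rw [← Real.log_zpow, hpow, Real.log_one]
    have : Real.log (dist (x i) (x j)) = 0 := by
      rcases mul_eq_zero.mp hlog with h | h
      · exact absurd h (by exact_mod_cast hc2)
      · exact h
    rcases Real.log_eq_zero.mp this with h | h | h
    · linarith
    · exact h
    · linarith
  clear_value β
  -- complex square root of β
  obtain ⟨s, hs2, hsim⟩ : ∃ s : ℂ, s ^ 2 = (β:ℂ) ∧ (s.im = 0 ∨ s.re = 0) := by
    rcases le_or_gt 0 β with h | h
    · exact ⟨(Real.sqrt β : ℂ), by rw [← Complex.ofReal_pow, Real.sq_sqrt h],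
        Or.inl (Complex.ofReal_im _)⟩
    · refine ⟨Complex.I * (Real.sqrt (-β) : ℂ), ?_, Or.inr (by simp)⟩
      rw [mul_pow, Complex.I_sq, ← Complex.ofReal_pow, Real.sq_sqrt (by linarith)]
      push_cast
      ring
  have hs0 : s ≠ 0 := by
    intro h
    apply hβ0
    have h2 : (β:ℂ) = 0 := by rw [← hs2]; simp [h]
    exact_mod_cast h2
  -- the data
  set z : Fin n → ℂ := fun i => s * ((Δ i / m i : ℝ) : ℂ) with hz
  set D : ℝ := ∑ j, Δ j * ‖x j‖ ^ 2 with hD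
  set Δ0 : ℂ := -s * (D : ℂ) with hΔ0
  have hznz : ∀ i, Δ i ≠ 0 → z i ≠ 0 := by
    intro i hi
    simp only [hz]
    exact mul_ne_zero hs0 (by
      simp only [ne_eq, Complex.ofReal_eq_zero]
      exact div_ne_zero hi (hm i).ne')
  -- component 1: all real or all imaginary
  have comp1 : (((∀ i, (z i).im = 0) ∧ Δ0.im = 0) ∨ ((∀ i, (z i).re = 0) ∧ Δ0.re = 0)) := by
    rcases hsim with h | h
    · left
      constructor
      · intro i; simp [hz, Complex.mul_im, h]
      · simp [hΔ0, Complex.mul_im, Complex.neg_im, Complex.neg_re, h]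
    · right
      constructor
      · intro i; simp [hz, Complex.mul_re, h]
      · simp [hΔ0, Complex.mul_re, Complex.neg_im, Complex.neg_re, h]
  -- component 2: at least two nonzero
  have comp2 : ∃ i j : Fin n, i ≠ j ∧ z i ≠ 0 ∧ z j ≠ 0 := by
    obtain ⟨j0, hj0ne, hj0⟩ : ∃ j0, j0 ≠ i0 ∧ Δ j0 ≠ 0 := by
      by_contra hcon
      push_neg at hcon
      apply hi0
      have := Finset.sum_eq_single i0 (fun b _ hb => hcon b hb) (fun h => absurd (Finset.mem_univ i0) h)
      rw [← this, hΔ1]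
    exact ⟨i0, j0, fun h => hj0ne h.symm, hznz i0 hi0, hznz j0 hj0⟩
  -- component 3: the quadratic equations
  have comp3 : ∀ i j : Fin n, i < j → (dist (x i) (x j) : ℂ) ^ c2 - 1 - z i * z j = 0 := by
    intro i j hij
    have hij' : i ≠ j := ne_of_lt hij
    have hr : β * (Δ i / m i) * (Δ j / m j) = dist (x i) (x j) ^ c2 - 1 := by
      have hk := hkey2 i j hij'
      have hmi : m i ≠ 0 := (hm i).ne'
      have hmj : m j ≠ 0 := (hm j).ne'
      field_simp
      linear_combination -hk
    have hzz : z i * z j = ((dist (x i) (x j) ^ c2 - 1 : ℝ) : ℂ) := by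
      calc z i * z j = s^2 * (((Δ i / m i : ℝ):ℂ) * ((Δ j / m j : ℝ):ℂ)) := by
            rw [hz]; ring
        _ = ((β * (Δ i / m i) * (Δ j / m j) : ℝ) : ℂ) := by rw [hs2]; push_cast; ring
        _ = _ := by rw [hr]
    rw [hzz, ← Complex.ofReal_zpow]
    push_cast
    ring
  -- component 4
  have comp4 : (cayleyMenger x).det = 0 := aux_cm x Δ hΔne hΔ1 hΔ2
  -- component 5
  have comp5 : ∑ j, (m j : ℂ) * z j = 0 := by
    have e : ∀ j, (m j : ℂ) * z j = s * ((Δ j : ℝ) : ℂ) := by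
      intro j
      rw [hz]
      have : (m j : ℂ) * ((Δ j / m j : ℝ) : ℂ) = ((Δ j : ℝ) : ℂ) := by
        have hmj : (m j : ℂ) ≠ 0 := Complex.ofReal_ne_zero.mpr (hm j).ne'
        push_cast
        field_simp
      calc (m j : ℂ) * (s * ((Δ j / m j : ℝ) : ℂ))
          = s * ((m j : ℂ) * ((Δ j / m j : ℝ) : ℂ)) := by ring
        _ = s * ((Δ j : ℝ) : ℂ) := by rw [this]
    rw [Finset.sum_congr rfl fun j _ => e j, ← Finset.mul_sum]
    have : ∑ j, ((Δ j : ℝ) : ℂ) = ((∑ j, Δ j : ℝ) : ℂ) := by push_cast; ring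
    rw [this, hΔ1]
    simp
  -- component 6
  have comp6 : ∀ l : Fin n, Δ0 + ∑ j, (m j : ℂ) * z j * (dist (x j) (x l) : ℂ) ^ 2 = 0 := by
    intro l
    have e : ∀ j, (m j : ℂ) * z j * (dist (x j) (x l) : ℂ) ^ 2
        = s * ((Δ j * dist (x j) (x l) ^ 2 : ℝ) : ℂ) := by
      intro j
      rw [hz]
      push_cast
      have hmj : (m j : ℂ) ≠ 0 := by
        simp only [ne_eq, Complex.ofReal_eq_zero]; exact (hm j).ne'
      field_simp
      try ring
    rw [Finset.sum_congr rfl fun j _ => e j, ← Finset.mul_sum]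
    have : ∑ j, ((Δ j * dist (x j) (x l) ^ 2 : ℝ) : ℂ)
        = ((∑ j, Δ j * dist (x j) (x l) ^ 2 : ℝ) : ℂ) := by push_cast; ring
    rw [this, aux_sum x Δ hΔ1 hΔ2 l, hΔ0, ← hD]
    ring
  refine ⟨z, Δ0, comp1, comp2, comp3, comp4, comp5, comp6, ?_⟩
  -- uniqueness
  intro z' Δ0' h1' h2' h3'
  obtain ⟨a, b, hab, ha, hb⟩ := comp2
  have hprod : ∀ i j : Fin n, i ≠ j → z' i * z' j = z i * z j := by
    intro i j hij
    rcases lt_or_gt_of_ne hij with h | h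
    · have a1 := h1' i j h
      have a2 := comp3 i j h
      linear_combination a2 - a1
    · have a1 := h1' j i h
      have a2 := comp3 j i h
      linear_combination a2 - a1
  rcases aux_uniq m hm z z' hprod a b hab ha hb comp5 h2' with h | h
  · left
    refine ⟨h, ?_⟩
    have e1 := comp6 a
    have e2 := h3' a
    rw [h] at e2
    linear_combination e2 - e1
  · right
    refine ⟨h, ?_⟩
    have e1 := comp6 a
    have e2 := h3' a
    rw [h] at e2
    have : ∑ j, (m j : ℂ) * (-z) j * (dist (x j) (x a) : ℂ) ^ 2
        = -∑ j, (m j : ℂ) * z j * (dist (x j) (x a) : ℂ) ^ 2 := by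
      rw [← Finset.sum_neg_distrib]
      exact Finset.sum_congr rfl fun j _ => by
        simp only [Pi.neg_apply]
        ring
    rw [this] at e2
    linear_combination e2 + e1
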